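/- Let (H_i, d_i)_{i∈ℤ} be a cochain complex of complex Hilbert spaces such that for every i ∈ ℤ the range of d_i is a closed subspace of H_{i+1}. Then for every i ∈ ℤ the range of the Laplace operator Δ_i is a closed subspace of H_i. -/

import Mathlib

set_option maxHeartbeats 1000000


open scoped ComplexInnerProductSpace

open ContinuousLinearMap in
/-- Key lemma: if `T` has closed range, then `(ker T)ᗮ ⊆ range (T† ∘ T)`. -/
lemma key {E F : Type*} [NormedAddCommGroup E] [InnerProductSpace ℂ E] [CompleteSpace E]
    [NormedAddCommGroup F] [InnerProductSpace ℂ F] [CompleteSpace F]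
    (T : E →L[ℂ] F) (hT : IsClosed (Set.range T)) {x : E}
    (hx : x ∈ (LinearMap.ker (T : E →ₗ[ℂ] F))ᗮ) : ∃ u, adjoint T (T u) = x := by
  set K : Submodule ℂ E := (LinearMap.ker (T : E →ₗ[ℂ] F))ᗮ with hK
  haveI : CompleteSpace K := (Submodule.isClosed_orthogonal _).completeSpace_coe
  set R : Submodule ℂ F := LinearMap.range (T : E →ₗ[ℂ] F) with hR
  haveI : CompleteSpace R := by
    have : IsClosed (R : Set F) := by rwa [hR, LinearMap.coe_range]
    exact this.completeSpace_coe
  -- restricted map K → R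
  set f : K →L[ℂ] R :=
    (T.comp K.subtypeL).codRestrict R (fun y => LinearMap.mem_range_self _ _) with hf
  have hker : LinearMap.ker (f : K →ₗ[ℂ] R) = ⊥ := by
    rw [Submodule.eq_bot_iff]
    intro a ha
    have ha' : T ↑a = 0 := by
      have : ((f a : F)) = 0 := by
        rw [LinearMap.mem_ker] at ha
        exact congrArg Subtype.val ha
      exact this
    have hmem : (↑a : E) ∈ LinearMap.ker (T : E →ₗ[ℂ] F) := ha'
    have : ((↑a : E)) = 0 := by
      have h0 := (Submodule.mem_orthogonal _ _).mp a.2 _ hmem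
      rwa [inner_self_eq_zero] at h0
    exact Subtype.ext this
  have hrange : LinearMap.range (f : K →ₗ[ℂ] R) = ⊤ := by
    rw [LinearMap.range_eq_top]
    rintro ⟨y, z, hz⟩
    obtain ⟨k, hk, k', hk', hsum⟩ := Submodule.exists_add_mem_mem_orthogonal
      (K := ((LinearMap.ker (T : E →ₗ[ℂ] F)) : Submodule ℂ E)) z
    refine ⟨⟨k', hk'⟩, Subtype.ext ?_⟩
    simp only [hf, ContinuousLinearMap.coe_coe, ContinuousLinearMap.coe_codRestrict_apply, ContinuousLinearMap.comp_apply,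
      Submodule.coe_subtypeL', Submodule.coe_subtype]
    rw [← hz, hsum]
    simp only [map_add]
    have hTk : T k = 0 := hk
    show T k' = T k + T k'
    rw [hTk, zero_add]
  set e := ContinuousLinearEquiv.ofBijective f hker hrange with he
  set M : ℝ := ‖(e.symm : R →L[ℂ] K)‖ with hM
  have hM0 : 0 ≤ M := norm_nonneg _
  have hb : ∀ y : K, ‖y‖ ≤ M * ‖T ↑y‖ := by
    intro y
    have h1 : y = e.symm (e y) := (e.symm_apply_apply y).symm
    calc ‖y‖ = ‖e.symm (e y)‖ := by rw [← h1]
      _ ≤ M * ‖e y‖ := (e.symm : R →L[ℂ] K).le_opNorm _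
      _ = M * ‖T ↑y‖ := rfl
  -- S : K → K, restriction of T† ∘ T
  have hSmem : ∀ y : K, adjoint T (T ↑y) ∈ K := by
    intro y
    show _ ∈ (LinearMap.ker (T : E →ₗ[ℂ] F))ᗮ
    rw [Submodule.mem_orthogonal]
    intro v hv
    rw [ContinuousLinearMap.adjoint_inner_right]
    have : T v = 0 := hv
    rw [this, inner_zero_left]
  set S : K →L[ℂ] K :=
    ((adjoint T ∘L T).comp K.subtypeL).codRestrict K hSmem with hS
  have hSapp : ∀ y : K, (S y : E) = adjoint T (T ↑y) := fun y => rfl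
  have hSb : ∀ y : K, ‖y‖ ≤ (M * M) * ‖S y‖ := by
    intro y
    rcases eq_or_ne y 0 with rfl | hy0
    · simp
    have hy : 0 < ‖y‖ := norm_pos_iff.mpr hy0
    have h2 : ‖T ↑y‖ ^ 2 ≤ ‖S y‖ * ‖y‖ := by
      have := ContinuousLinearMap.apply_norm_sq_eq_inner_adjoint_left T (↑y : E)
      rw [this]
      calc RCLike.re ⟪(adjoint T ∘L T) ↑y, ↑y⟫ ≤ ‖⟪(adjoint T ∘L T) (↑y : E), (↑y : E)⟫‖ :=
            RCLike.re_le_norm _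
        _ ≤ ‖(adjoint T ∘L T) (↑y : E)‖ * ‖(↑y : E)‖ := norm_inner_le_norm _ _
        _ = ‖S y‖ * ‖y‖ := rfl
    have h3 := hb y
    nlinarith [norm_nonneg (T (↑y : E)), norm_nonneg (S y), sq_nonneg (‖y‖ - M * ‖T ↑y‖)]
  -- S has closed range
  have hanti : AntilipschitzWith (Real.toNNReal (M * M)) S := by
    apply S.antilipschitz_of_bound
    intro y
    refine le_trans (hSb y) ?_
    rw [Real.coe_toNNReal _ (mul_nonneg hM0 hM0)]
  have hScl : IsClosed (Set.range S) := hanti.isClosed_range S.uniformContinuous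
  set W : Submodule ℂ K := LinearMap.range (S : K →ₗ[ℂ] K) with hW
  haveI : CompleteSpace W := by
    have : IsClosed (W : Set K) := by rwa [hW, LinearMap.coe_range]
    exact this.completeSpace_coe
  have hWtop : W = ⊤ := by
    rw [← Submodule.orthogonal_eq_bot_iff]
    rw [Submodule.eq_bot_iff]
    intro y hy
    have h0 : ⟪S y, y⟫ = 0 := (Submodule.mem_orthogonal _ _).mp hy _ (LinearMap.mem_range_self _ _)
    have h1 : ⟪(S y : E), (y : E)⟫ = 0 := h0
    rw [hSapp, ContinuousLinearMap.adjoint_inner_left, inner_self_eq_zero] at h1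
    have hyk : (↑y : E) ∈ LinearMap.ker (T : E →ₗ[ℂ] F) := h1
    have : ⟪(↑y : E), (↑y : E)⟫ = 0 := (Submodule.mem_orthogonal _ _).mp y.2 _ hyk
    rw [inner_self_eq_zero] at this
    exact Subtype.ext this
  obtain ⟨u, hu⟩ : ∃ u : K, S u = ⟨x, hx⟩ := by
    have : (⟨x, hx⟩ : K) ∈ W := hWtop ▸ Submodule.mem_top
    exact this
  exact ⟨↑u, by rw [← hSapp, hu]⟩

/-- The sum of a closed submodule and a closed submodule of its orthogonal complement
is closed. -/
lemma closed_sup {E : Type*} [NormedAddCommGroup E] [InnerProductSpace ℂ E] [CompleteSpace E]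
    (U V : Submodule ℂ E) (hU : IsClosed (U : Set E)) (hV : IsClosed (V : Set E))
    (hUV : V ≤ Uᗮ) : IsClosed ((U ⊔ V : Submodule ℂ E) : Set E) := by
  haveI : CompleteSpace U := hU.completeSpace_coe
  set P : E →L[ℂ] E := U.subtypeL.comp U.orthogonalProjectionOnto with hP
  have hPuv : ∀ x ∈ (U ⊔ V : Submodule ℂ E), P x ∈ U ∧ x - P x ∈ V := by
    intro x hxm
    obtain ⟨u, hu, v, hv, rfl⟩ := Submodule.mem_sup.mp hxm
    have hPx : P (u + v) = u := by
      simp only [hP, ContinuousLinearMap.comp_apply, map_add, Submodule.coe_subtypeL',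
        Submodule.coe_subtype]
      rw [show (U.orthogonalProjectionOnto u : E) = u from Submodule.starProjection_eq_self_iff.mpr hu,
        Submodule.orthogonalProjectionOnto_apply_of_mem_orthogonal (hUV hv)]
      simp
    rw [hPx]
    exact ⟨hu, by simpa using hv⟩
  apply isClosed_of_closure_subset
  intro x hxcl
  have h1 : P x ∈ (U : Set E) := by
    rw [← hU.closure_eq]
    exact map_mem_closure P.continuous hxcl (fun y hy => (hPuv y hy).1)
  have h2 : x - P x ∈ (V : Set E) := by
    rw [← hV.closure_eq]
    exact map_mem_closure (f := fun z => z - P z) (continuous_id.sub P.continuous) hxcl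
      (fun y hy => (hPuv y hy).2)
  have : x = P x + (x - P x) := by abel
  rw [this]
  exact Submodule.add_mem _ (Submodule.mem_sup_left h1) (Submodule.mem_sup_right h2)

/-- The `i`-th Laplace operator of a cochain complex `(H i, d i)` of complex Hilbert
spaces, acting on `H (i+1)`: `Δ_{i+1} = d_i ∘ (d_i)* + (d_{i+1})* ∘ d_{i+1}`. -/
noncomputable def Lap (H : ℤ → Type*) [∀ i, NormedAddCommGroup (H i)]
    [∀ i, InnerProductSpace ℂ (H i)] [∀ i, CompleteSpace (H i)]
    (d : ∀ i, H i →L[ℂ] H (i + 1)) (i : ℤ) : H (i + 1) →L[ℂ] H (i + 1) :=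
  (d i).comp (ContinuousLinearMap.adjoint (d i)) +
    (ContinuousLinearMap.adjoint (d (i + 1))).comp (d (i + 1))

/-- If every differential of a cochain complex of complex Hilbert spaces has closed
range, then every Laplace operator has closed range. -/
theorem stmt8 (H : ℤ → Type*) [∀ i, NormedAddCommGroup (H i)]
    [∀ i, InnerProductSpace ℂ (H i)] [∀ i, CompleteSpace (H i)]
    (d : ∀ i, H i →L[ℂ] H (i + 1))
    (hd : ∀ i, (d (i + 1)).comp (d i) = 0)
    (hclosed : ∀ i : ℤ, IsClosed (Set.range (d i))) :
    ∀ i : ℤ, IsClosed (Set.range (Lap H d i)) := by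
  intro i
  set A := d i with hA
  set B := d (i + 1) with hB
  set U : Submodule ℂ (H (i + 1)) := LinearMap.range (A : H i →ₗ[ℂ] H (i + 1)) with hU
  set V : Submodule ℂ (H (i + 1)) := (LinearMap.ker (B : H (i + 1) →ₗ[ℂ] H (i + 1 + 1)))ᗮ with hV
  have hBA : ∀ z, B (A z) = 0 := by
    intro z
    have := ContinuousLinearMap.ext_iff.mp (hd i) z
    simpa using this
  have hUkerB : U ≤ LinearMap.ker (B : H (i + 1) →ₗ[ℂ] H (i + 1 + 1)) := by
    rintro _ ⟨z, rfl⟩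
    exact hBA z
  have hVU : V ≤ Uᗮ := by
    intro v hv
    rw [Submodule.mem_orthogonal]
    intro u hu
    exact (Submodule.mem_orthogonal _ _).mp hv u (hUkerB hu)
  have hAadjV : ∀ v ∈ V, ContinuousLinearMap.adjoint A v = 0 := by
    intro v hv
    rw [← inner_self_eq_zero (𝕜 := ℂ), ContinuousLinearMap.adjoint_inner_left]
    exact (Submodule.mem_orthogonal' _ _).mp (hVU hv) _ (LinearMap.mem_range_self _ _)
  have hLap : ∀ x, Lap H d i x =
      A (ContinuousLinearMap.adjoint A x) + ContinuousLinearMap.adjoint B (B x) := fun x => rfl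
  have hrangeEq : Set.range (Lap H d i) = ((U ⊔ V : Submodule ℂ (H (i + 1))) : Set (H (i + 1))) := by
    apply Set.Subset.antisymm
    · rintro _ ⟨x, rfl⟩
      rw [hLap]
      refine Submodule.add_mem _ (Submodule.mem_sup_left (LinearMap.mem_range_self _ _))
        (Submodule.mem_sup_right ?_)
      rw [hV, Submodule.mem_orthogonal]
      intro k hk
      rw [ContinuousLinearMap.adjoint_inner_right]
      have hk0 : B k = 0 := hk
      rw [hk0, inner_zero_left]
    · intro x hxm
      obtain ⟨u, hu, v, hv, rfl⟩ := Submodule.mem_sup.mp hxm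
      obtain ⟨z, rfl⟩ := hu
      obtain ⟨k, hk, z₁, hz₁, rfl⟩ :=
        Submodule.exists_add_mem_mem_orthogonal (K := LinearMap.ker (A : H i →ₗ[ℂ] H (i + 1))) z
      obtain ⟨w, hw⟩ := key A (hclosed i) hz₁
      obtain ⟨s, hs⟩ := key B (hclosed (i + 1)) hv
      obtain ⟨k', hk', s₁, hs₁, rfl⟩ :=
        Submodule.exists_add_mem_mem_orthogonal (K := LinearMap.ker (B : H (i + 1) →ₗ[ℂ] H (i + 1 + 1))) s
      refine ⟨A w + s₁, ?_⟩
      rw [hLap]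
      have e1 : ContinuousLinearMap.adjoint A (A w) = z₁ := hw
      have e2 : ContinuousLinearMap.adjoint A s₁ = 0 := hAadjV s₁ hs₁
      have e3 : B (A w) = 0 := hBA w
      have e4 : B k' = 0 := hk'
      have e5 : A k = 0 := hk
      have e6 : ContinuousLinearMap.adjoint B (B s₁) = v := by
        rw [← hs]
        simp [map_add, e4]
      simp only [ContinuousLinearMap.coe_coe, map_add, e1, e2, e3, e4, e5, e6, map_zero, add_zero, zero_add]
  rw [hrangeEq]
  apply closed_sup U V ?_ (Submodule.isClosed_orthogonal _) hVU
  have : (U : Set (H (i + 1))) = Set.range A := by rw [hU, LinearMap.coe_range]; rfl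
  rw [this]
  exact hclosed i
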